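/- arXiv:0801.0019 — 2 statements merged into one kernel-verified Lean document; each statement's English description precedes it below -/
import Mathlib

section
/- Energy trapping: let K, P ≥ 0 with P ≤ C^4 K² (C > 0), K < 1/C^4, and K/2 - P/4 ≤ (1-δ₀)/(4C^4) for some δ₀ ∈ (0,1). Set δ̄ = δ₀^{1/2}. Then: (i) K - P ≥ (δ̄/2) K; (ii) K ≤ (1-δ̄)/C^4; (iii) K/2 - P/4 ≥ 0. -/
theorem stmt6 (C δ₀ K P : ℝ) (hC : 0 < C) (hδ₀ : δ₀ ∈ Set.Ioo (0:ℝ) 1)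
    (hK0 : 0 ≤ K) (hP0 : 0 ≤ P) (hPK : P ≤ C ^ 4 * K ^ 2)
    (hK : K < 1 / C ^ 4)
    (hE : K / 2 - P / 4 ≤ (1 - δ₀) / (4 * C ^ 4)) :
    (Real.sqrt δ₀ / 2) * K ≤ K - P ∧
      K ≤ (1 - Real.sqrt δ₀) / C ^ 4 ∧
      0 ≤ K / 2 - P / 4 := by
  obtain ⟨hδp, hδ1⟩ := hδ₀
  have hc : 0 < C ^ 4 := by positivity
  have hcK : C ^ 4 * K < 1 := by
    rw [lt_div_iff₀ hc] at hK; linarith [hK]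
  have hEd : K / 2 - P / 4 ≤ (1 - δ₀) / (4 * C ^ 4) := hE
  have hE' : (K / 2 - P / 4) * (4 * C ^ 4) ≤ 1 - δ₀ := by
    rw [le_div_iff₀ (by positivity)] at hEd
    linarith
  have hsq : δ₀ ≤ (1 - C ^ 4 * K) ^ 2 := by nlinarith
  have hs : Real.sqrt δ₀ ≤ 1 - C ^ 4 * K := by
    have h1 : 0 ≤ 1 - C ^ 4 * K := by linarith
    calc Real.sqrt δ₀ ≤ Real.sqrt ((1 - C ^ 4 * K) ^ 2) := Real.sqrt_le_sqrt hsq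
      _ = 1 - C ^ 4 * K := by rw [Real.sqrt_sq h1]
  have hs0 : 0 ≤ Real.sqrt δ₀ := Real.sqrt_nonneg _
  have hKK : C ^ 4 * K ^ 2 ≤ K := by nlinarith
  refine ⟨?_, ?_, ?_⟩
  · nlinarith [mul_le_mul_of_nonneg_left hs hK0]
  · rw [le_div_iff₀ hc]; nlinarith
  · nlinarith
end

section
/- Blow-up side of the variational dichotomy (abstract version): let K ≥ 0, P ≥ 0, C > 0, δ₀ ∈ (0,1) with P ≤ C^4 K², K/2 - P/4 < (1-δ₀)/(4C^4), and K > 1/C^4. Then there exists δ̃ > 0 depending only on δ₀ and C such that K > (1+δ̃)/C^4, and consequently K - P = 4(K/2 - P/4) - K < -(δ₀ + δ̃)/C^4 < 0. -/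
theorem stmt8 (C δ₀ : ℝ) (hC : 0 < C) (hδ₀ : δ₀ ∈ Set.Ioo (0:ℝ) 1) :
    ∃ δt : ℝ, 0 < δt ∧
      ∀ K P : ℝ, 0 ≤ K → 0 ≤ P → P ≤ C ^ 4 * K ^ 2 →
        K / 2 - P / 4 < (1 - δ₀) / (4 * C ^ 4) → 1 / C ^ 4 < K →
        (1 + δt) / C ^ 4 < K ∧
        K - P < -((δ₀ + δt) / C ^ 4) ∧
        -((δ₀ + δt) / C ^ 4) < 0 := by
  obtain ⟨hδ₀0, hδ₀1⟩ := hδ₀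
  have hc : (0:ℝ) < C ^ 4 := by positivity
  refine ⟨Real.sqrt δ₀, Real.sqrt_pos.mpr hδ₀0, ?_⟩
  intro K P hK hP hPK hE hK1
  have hKc : 1 < C ^ 4 * K := by
    rw [div_lt_iff₀ hc] at hK1; linarith [hK1]
  -- multiply energy inequality through
  have hE' : 2 * (C ^ 4) * K - (C ^ 4) * P < 1 - δ₀ := by
    have h4 : (0:ℝ) < 4 * C ^ 4 := by positivity
    have := mul_lt_mul_of_pos_right hE h4
    rw [div_mul_cancel₀ _ (ne_of_gt h4)] at this
    nlinarith [this]
  have hsq : δ₀ < (C ^ 4 * K - 1) ^ 2 := by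
    nlinarith [mul_le_mul_of_nonneg_left hPK (le_of_lt hc)]
  have h1 : Real.sqrt δ₀ < C ^ 4 * K - 1 := by
    have := Real.sqrt_lt_sqrt (le_of_lt hδ₀0) hsq
    rwa [Real.sqrt_sq (by linarith)] at this
  have hfirst : (1 + Real.sqrt δ₀) / C ^ 4 < K := by
    rw [div_lt_iff₀ hc]; nlinarith
  refine ⟨hfirst, ?_, ?_⟩
  · rw [show -((δ₀ + Real.sqrt δ₀) / C ^ 4) = (-(δ₀ + Real.sqrt δ₀)) / C ^ 4 by ring,
      lt_div_iff₀ hc]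
    nlinarith
  · have : 0 < (δ₀ + Real.sqrt δ₀) / C ^ 4 := by positivity
    linarith
end
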